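/- Let G = (V,E) be a finite graph with n(G) vertices and covered components polynomial C(G) = C(G,x,y,z). For nonnegative integers n', m', k', let g(G,n',m',k') be the number of edge subsets A ⊆ E whose edge-induced subgraph (whose vertex set is the set of vertices incident to an edge of A and whose edge set is A) has exactly n' vertices, m' edges and k' connected components. Then g(G,n',m',k') = [x^{n(G)−n'+k'} y^{m'} z^{k'}]C(G). -/
import Mathlib


open MvPolynomial Finset
open scoped Classical

noncomputable section

variable {V : Type}

/-- The (finite) edge set of a simple graph on a finite vertex type, as a `Finset`. -/
def edgeFinset' [Fintype V] (G : SimpleGraph V) : Finset (Sym2 V) :=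
  (Set.toFinite G.edgeSet).toFinset

/-- `k(G)`: the number of connected components of `G`. -/
def kG (G : SimpleGraph V) : ℕ := Nat.card G.ConnectedComponent

/-- `c(G)`: the number of covered components of `G`, i.e. connected components
containing at least one edge. -/
def cG (G : SimpleGraph V) : ℕ :=
  Nat.card {c : G.ConnectedComponent // ∃ v w, G.Adj v w ∧ G.connectedComponentMk v = c}

/-- The covered components polynomial
`C(G,x,y,z) = ∑_{A ⊆ E} x^{k(⟨A⟩)} y^{|A|} z^{c(⟨A⟩)}` of a finite simple graph, where
`⟨A⟩` denotes the spanning subgraph with edge set `A`, and `x = X 0`, `y = X 1`,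
`z = X 2`. -/
def ccp [Fintype V] (G : SimpleGraph V) : MvPolynomial (Fin 3) ℤ :=
  ∑ A ∈ (edgeFinset' G).powerset,
    X 0 ^ kG (SimpleGraph.fromEdgeSet (A : Set (Sym2 V))) * X 1 ^ A.card *
      X 2 ^ cG (SimpleGraph.fromEdgeSet (A : Set (Sym2 V)))

/-- `[x^i y^j z^k] P`: the coefficient of the monomial `x^i y^j z^k`. -/
def coeff3 (P : MvPolynomial (Fin 3) ℤ) (i j k : ℕ) : ℤ :=
  MvPolynomial.coeff (Finsupp.single 0 i + Finsupp.single 1 j + Finsupp.single 2 k) P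

/-- The vertex set of the subgraph edge-induced by `A`: all vertices incident to an edge
of `A`. -/
def vsupp [Fintype V] (A : Finset (Sym2 V)) : Finset V :=
  Finset.univ.filter (fun v => ∃ s ∈ A, v ∈ s)

/-- The number of connected components of the subgraph edge-induced by `A`, i.e. the
number of connected components of the spanning subgraph `⟨A⟩` containing a vertex
incident to an edge of `A`. -/
def nCompInduced [Fintype V] (A : Finset (Sym2 V)) : ℕ :=
  Nat.card {c : (SimpleGraph.fromEdgeSet (A : Set (Sym2 V))).ConnectedComponent //
    ∃ v, (∃ s ∈ A, v ∈ s) ∧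
      (SimpleGraph.fromEdgeSet (A : Set (Sym2 V))).connectedComponentMk v = c}

/-! ### Auxiliary lemmas -/

lemma mem_vsupp' [Fintype V] {A : Finset (Sym2 V)} {v : V} :
    v ∈ vsupp A ↔ ∃ s ∈ A, v ∈ s := by
  simp [vsupp]

/-- A vertex not incident to any edge of `A` is alone in its component of `⟨A⟩`. -/
lemma eq_of_isolated [Fintype V] {A : Finset (Sym2 V)} {v w : V}
    (hv : ¬ ∃ s ∈ A, v ∈ s)
    (h : (SimpleGraph.fromEdgeSet (A : Set (Sym2 V))).Reachable v w) : v = w := by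
  obtain ⟨p⟩ := h
  cases p with
  | nil => rfl
  | cons hadj _ =>
    rename_i u _
    rw [SimpleGraph.fromEdgeSet_adj] at hadj
    exact absurd ⟨s(v, u), hadj.1, by simp⟩ hv

/-- Covered components of `⟨A⟩` are exactly the components meeting `vsupp A`,
provided the elements of `A` are genuine edges (non-diagonal). -/
lemma covered_iff [Fintype V] {A : Finset (Sym2 V)} (hA : ∀ s ∈ A, ¬ s.IsDiag)
    (c : (SimpleGraph.fromEdgeSet (A : Set (Sym2 V))).ConnectedComponent) :
    (∃ v w, (SimpleGraph.fromEdgeSet (A : Set (Sym2 V))).Adj v w ∧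
      (SimpleGraph.fromEdgeSet (A : Set (Sym2 V))).connectedComponentMk v = c) ↔
    (∃ v, (∃ s ∈ A, v ∈ s) ∧
      (SimpleGraph.fromEdgeSet (A : Set (Sym2 V))).connectedComponentMk v = c) := by
  constructor
  · rintro ⟨v, w, hadj, hc⟩
    rw [SimpleGraph.fromEdgeSet_adj] at hadj
    exact ⟨v, ⟨s(v, w), hadj.1, by simp⟩, hc⟩
  · rintro ⟨v, ⟨s, hs, hvs⟩, hc⟩
    induction s with
    | h a b =>
      have hab : a ≠ b := by
        intro h; apply hA _ hs; rw [h]; exact Sym2.mk_isDiag_iff.2 rfl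
      have hadj : (SimpleGraph.fromEdgeSet (A : Set (Sym2 V))).Adj a b := by
        rw [SimpleGraph.fromEdgeSet_adj]; exact ⟨hs, hab⟩
      rcases Sym2.mem_iff.1 hvs with rfl | rfl
      · exact ⟨v, b, hadj, hc⟩
      · exact ⟨v, a, hadj.symm, hc⟩

lemma cG_eq_nCompInduced [Fintype V] {A : Finset (Sym2 V)} (hA : ∀ s ∈ A, ¬ s.IsDiag) :
    cG (SimpleGraph.fromEdgeSet (A : Set (Sym2 V))) = nCompInduced A :=
  Nat.card_congr (Equiv.subtypeEquivRight (covered_iff hA))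

/-- The key counting identity: components of `⟨A⟩` split into covered components and
isolated vertices. -/
lemma kG_add_vsupp [Fintype V] (A : Finset (Sym2 V)) :
    kG (SimpleGraph.fromEdgeSet (A : Set (Sym2 V))) + (vsupp A).card =
      Fintype.card V + nCompInduced A := by
  set H := SimpleGraph.fromEdgeSet (A : Set (Sym2 V)) with hH
  set P : H.ConnectedComponent → Prop := fun c =>
    ∃ v, (∃ s ∈ A, v ∈ s) ∧ H.connectedComponentMk v = c with hP
  have hcompl : Fintype.card {c // ¬ P c} =
      Fintype.card H.ConnectedComponent - Fintype.card {c // P c} :=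
    Fintype.card_subtype_compl P
  have hle' : Fintype.card {c // P c} ≤ Fintype.card H.ConnectedComponent :=
    Fintype.card_subtype_le _
  have hiso : Fintype.card {c // ¬ P c} = ((vsupp A)ᶜ).card := by
    rw [← Fintype.card_coe]
    apply Fintype.card_congr
    apply Equiv.symm
    refine Equiv.ofBijective (fun v => ⟨H.connectedComponentMk v.1, ?_⟩) ⟨?_, ?_⟩
    · rintro ⟨w, ⟨s, hs, hws⟩, hw⟩
      have hv : ¬ ∃ s ∈ A, (v : V) ∈ s := by
        have := v.2
        rw [Finset.mem_compl] at this
        simpa [mem_vsupp'] using this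
      have hvw : (v : V) = w :=
        eq_of_isolated hv (SimpleGraph.ConnectedComponent.exact hw).symm
      exact hv ⟨s, hs, hvw ▸ hws⟩
    · rintro ⟨v, hv⟩ ⟨w, hw⟩ h
      have hv' : ¬ ∃ s ∈ A, v ∈ s := by
        rw [Finset.mem_compl] at hv
        simpa [mem_vsupp'] using hv
      have := SimpleGraph.ConnectedComponent.exact (Subtype.mk_eq_mk.1 h)
      exact Subtype.ext (eq_of_isolated hv' this)
    · rintro ⟨c, hc⟩
      obtain ⟨v, rfl⟩ := c.exists_rep
      refine ⟨⟨v, ?_⟩, rfl⟩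
      rw [Finset.mem_compl]
      intro hv
      exact hc ⟨v, mem_vsupp'.1 hv, rfl⟩
  have hcard : ((vsupp A)ᶜ).card + (vsupp A).card = Fintype.card V := by
    rw [Finset.card_compl]
    have := Finset.card_le_univ (vsupp A)
    omega
  have hkG : kG H = Fintype.card H.ConnectedComponent := Nat.card_eq_fintype_card
  have hP' : nCompInduced A = Fintype.card {c // P c} := Nat.card_eq_fintype_card
  omega

lemma single3_eq_iff (a b c i j k : ℕ) :
    (Finsupp.single (0 : Fin 3) a + Finsupp.single 1 b + Finsupp.single 2 c =
      Finsupp.single 0 i + Finsupp.single 1 j + Finsupp.single 2 k) ↔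
      (a = i ∧ b = j ∧ c = k) := by
  constructor
  · intro h
    refine ⟨?_, ?_, ?_⟩
    · have := DFunLike.congr_fun h 0
      simpa [Finsupp.single_apply] using this
    · have := DFunLike.congr_fun h 1
      simpa [Finsupp.single_apply] using this
    · have := DFunLike.congr_fun h 2
      simpa [Finsupp.single_apply] using this
  · rintro ⟨rfl, rfl, rfl⟩; rfl

lemma coeff3_ccp [Fintype V] (G : SimpleGraph V) (i j k : ℕ) :
    coeff3 (ccp G) i j k =
      (((edgeFinset' G).powerset.filter (fun A : Finset (Sym2 V) =>
        kG (SimpleGraph.fromEdgeSet (A : Set (Sym2 V))) = i ∧ A.card = j ∧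
        cG (SimpleGraph.fromEdgeSet (A : Set (Sym2 V))) = k)).card : ℤ) := by
  unfold coeff3 ccp
  rw [MvPolynomial.coeff_sum, Finset.card_filter]
  push_cast
  refine Finset.sum_congr rfl fun A _ => ?_
  rw [X_pow_eq_monomial, X_pow_eq_monomial, X_pow_eq_monomial, monomial_mul, monomial_mul,
    coeff_monomial]
  by_cases h : kG (SimpleGraph.fromEdgeSet (A : Set (Sym2 V))) = i ∧ A.card = j ∧
      cG (SimpleGraph.fromEdgeSet (A : Set (Sym2 V))) = k
  · rw [if_pos ((single3_eq_iff _ _ _ _ _ _).2 h), if_pos h]; ring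
  · rw [if_neg (fun hh => h ((single3_eq_iff _ _ _ _ _ _).1 hh)), if_neg h]

/-- Let `G` be a finite graph with `n(G)` vertices and let
`g(G,n',m',k')` be the number of edge subsets whose edge-induced subgraph has `n'`
vertices, `m'` edges and `k'` components.  Then
`g(G,n',m',k') = [x^{n(G)−n'+k'} y^{m'} z^{k'}]C(G)` (the exponent of `x` being the
natural number `i` with `i + n' = n(G) + k'`). -/
theorem ccp_edge_induced_count {V : Type} [Fintype V] (G : SimpleGraph V)
    (n' m' k' : ℕ) (i : ℕ) (hi : i + n' = Fintype.card V + k') :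
    (((edgeFinset' G).powerset.filter (fun A =>
        (vsupp A).card = n' ∧ A.card = m' ∧ nCompInduced A = k')).card : ℤ) =
      coeff3 (ccp G) i m' k' := by
  rw [coeff3_ccp]
  congr 2
  apply Finset.filter_congr
  intro A hA
  rw [Finset.mem_powerset] at hA
  have hnd : ∀ s ∈ A, ¬ s.IsDiag := by
    intro s hs
    have : s ∈ G.edgeSet := by
      have := hA hs
      simpa [edgeFinset'] using this
    exact G.not_isDiag_of_mem_edgeSet this
  have hc := cG_eq_nCompInduced hnd
  have hk := kG_add_vsupp A
  have hle : (vsupp A).card ≤ Fintype.card V := Finset.card_le_univ _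
  constructor
  · rintro ⟨h1, h2, h3⟩
    refine ⟨by omega, h2, by omega⟩
  · rintro ⟨h1, h2, h3⟩
    refine ⟨by omega, h2, by omega⟩

end
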